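/- Fix naturals a, b, let F be the Fibonacci sequence (F 0 = 0, F 1 = 1), and define h : ℤ → ℤ with h n = 0 for n < 0, h 0 = 1, h 1 = a, h 2 = a^2 + b, h 3 = a^3 + 3ab, and h n = a*h(n-1) + b*h(n-2) + a*b*h(n-3) + b^2*h(n-4) for n ≥ 4. Then for all n ≥ 0: h(2n) - b^n * F(n+1) = a * ∑_{k=0}^{n} b^k * h(2n-2k-1) * F(k+2). -/

import Mathlib

lemma sum_step (b : ℤ) (h : ℤ → ℤ) (n : ℕ) :
    ∑ k ∈ Finset.range (n+2+1), b^k * h (2*(n:ℤ)+4 - 2*k - 1) * Nat.fib (k+2)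
    = h (2*(n:ℤ)+3)
      + b * ∑ k ∈ Finset.range (n+1+1), b^k * h (2*(n:ℤ)+2 - 2*k - 1) * Nat.fib (k+2)
      + b * h (2*(n:ℤ)+1)
      + b^2 * ∑ k ∈ Finset.range (n+1), b^k * h (2*(n:ℤ) - 2*k - 1) * Nat.fib (k+2) := by
  have A := Finset.sum_range_succ'
    (fun k : ℕ => b^k * h (2*(n:ℤ)+4 - 2*(k:ℤ) - 1) * (Nat.fib (k+2) : ℤ)) (n+2)
  rw [A]
  have e1 : ∀ k ∈ Finset.range (n+2),
      b^(k+1) * h (2*(n:ℤ)+4 - 2*((k+1:ℕ):ℤ) - 1) * (Nat.fib (k+1+2) : ℤ)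
      = b * (b^k * h (2*(n:ℤ)+2 - 2*(k:ℤ) - 1) * Nat.fib (k+2))
        + b * (b^k * h (2*(n:ℤ)+2 - 2*(k:ℤ) - 1) * Nat.fib (k+1)) := by
    intro k _
    have harg : 2*(n:ℤ)+4 - 2*((k+1:ℕ):ℤ) - 1 = 2*(n:ℤ)+2 - 2*(k:ℤ) - 1 := by
      push_cast; ring
    have hf : (Nat.fib (k+1+2) : ℤ) = Nat.fib (k+2) + Nat.fib (k+1) := by
      rw [Nat.fib_add_two]; push_cast; ring
    rw [harg, hf]; ring
  rw [Finset.sum_congr rfl e1, Finset.sum_add_distrib, ← Finset.mul_sum, ← Finset.mul_sum]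
  have B := Finset.sum_range_succ'
    (fun k : ℕ => b^k * h (2*(n:ℤ)+2 - 2*(k:ℤ) - 1) * (Nat.fib (k+1) : ℤ)) (n+1)
  rw [B]
  have e2 : ∀ k ∈ Finset.range (n+1),
      b^(k+1) * h (2*(n:ℤ)+2 - 2*((k+1:ℕ):ℤ) - 1) * (Nat.fib (k+1+1) : ℤ)
      = b * (b^k * h (2*(n:ℤ) - 2*(k:ℤ) - 1) * Nat.fib (k+2)) := by
    intro k _
    have harg : 2*(n:ℤ)+2 - 2*((k+1:ℕ):ℤ) - 1 = 2*(n:ℤ) - 2*(k:ℤ) - 1 := by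
      push_cast; ring
    rw [harg]
    ring
  rw [Finset.sum_congr rfl e2, ← Finset.mul_sum]
  norm_num
  rw [show (2*(n:ℤ)+2-1) = 2*(n:ℤ)+1 from by ring, show (2*(n:ℤ)+4-1) = 2*(n:ℤ)+3 from by ring]
  ring

theorem stmt_8 (a b : ℕ) (h : ℤ → ℤ)
    (hneg : ∀ n : ℤ, n < 0 → h n = 0)
    (h0 : h 0 = 1) (h1 : h 1 = a) (h2 : h 2 = (a : ℤ) ^ 2 + b)
    (h3 : h 3 = (a : ℤ) ^ 3 + 3 * a * b)
    (hrec : ∀ n : ℤ, 4 ≤ n →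
      h n = a * h (n - 1) + b * h (n - 2) + a * b * h (n - 3) + b ^ 2 * h (n - 4)) :
    ∀ n : ℕ,
      h (2 * n) - (b : ℤ) ^ n * Nat.fib (n + 1) =
        a * ∑ k ∈ Finset.range (n + 1),
          (b : ℤ) ^ k * h (2 * (n : ℤ) - 2 * k - 1) * Nat.fib (k + 2) := by
  have key : ∀ n : ℕ,
      (h (2 * (n:ℤ)) - (b : ℤ) ^ n * Nat.fib (n + 1) =
        a * ∑ k ∈ Finset.range (n + 1),
          (b : ℤ) ^ k * h (2 * (n : ℤ) - 2 * k - 1) * Nat.fib (k + 2)) ∧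
      (h (2 * (n:ℤ) + 2) - (b : ℤ) ^ (n+1) * Nat.fib (n + 2) =
        a * ∑ k ∈ Finset.range (n + 1 + 1),
          (b : ℤ) ^ k * h (2 * (n : ℤ) + 2 - 2 * k - 1) * Nat.fib (k + 2)) := by
    intro n
    induction n with
    | zero =>
      constructor
      · simp [Finset.sum_range_succ, hneg (-1) (by norm_num), h0]
      · simp only [Finset.sum_range_succ, Finset.sum_range_zero]
        norm_num [h2, h1, hneg (-1) (by norm_num)]
        ring
    | succ n ih =>
      obtain ⟨ih0, ih1⟩ := ih
      constructor
      · -- this is just ih1 with casts adjusted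
        have : 2 * ((n:ℤ)+1) = 2 * (n:ℤ) + 2 := by ring
        push_cast
        rw [this]
        convert ih1 using 3
      · -- main step
        push_cast
        have hr := hrec (2*(n:ℤ)+4) (by have : (0:ℤ) ≤ (n:ℤ) := Int.natCast_nonneg n; linarith)
        rw [show (2*(n:ℤ)+4-1) = 2*(n:ℤ)+3 from by ring,
            show (2*(n:ℤ)+4-2) = 2*(n:ℤ)+2 from by ring,
            show (2*(n:ℤ)+4-3) = 2*(n:ℤ)+1 from by ring,
            show (2*(n:ℤ)+4-4) = 2*(n:ℤ) from by ring] at hr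
        have hs := sum_step (b:ℤ) h n
        have fibeq : (Nat.fib (n+2+1) : ℤ) = Nat.fib (n+1+1) + Nat.fib (n+1) := by
          rw [show n+2+1 = (n+1)+2 from rfl, Nat.fib_add_two]
          push_cast; ring
        rw [show 2 * ((n:ℤ)+1) + 2 = 2*(n:ℤ)+4 from by ring]
        calc h (2*(n:ℤ)+4) - (b:ℤ)^(n+1+1) * Nat.fib (n+1+2)
            = a * (∑ k ∈ Finset.range (n+2+1),
                (b:ℤ)^k * h (2*(n:ℤ)+4 - 2*k - 1) * Nat.fib (k+2)) := by
              rw [hr, hs, show (n+1+2) = n+2+1 from rfl, fibeq]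
              linear_combination (b:ℤ) * ih1 + (b:ℤ)^2 * ih0
          _ = _ := by rfl
  exact fun n => (key n).1
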